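/- Let α > 0 and define φ_n(x) = √(n!/Γ(n+1+α)) · x^{α/2} e^{−x/2} L_n^{(α)}(x) for x > 0, and ℰ_{m,n} = ∫_0^∞ φ_m′(x) φ_n(x) dx (where φ_m′ denotes the derivative of φ_m). Then ℰ_{m,m} = 0 for all m ∈ ℕ, and for all integers m ≥ n + 1: ℰ_{m,n} = −(1/2) √( m! Γ(n+1+α) / (Γ(m+1+α) n!) ). -/

import Mathlib

open MeasureTheory

/-- The generalized Laguerre polynomial
`L_n^{(α)}(x) = ∑_{k=0}^{n} (−1)^k (Γ(n+α+1)/(Γ(k+α+1)(n−k)! k!)) x^k`. -/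
noncomputable def laguerreL (α : ℝ) (n : ℕ) (x : ℝ) : ℝ :=
  ∑ k ∈ Finset.range (n + 1),
    (-1 : ℝ) ^ k * (Real.Gamma ((n : ℝ) + α + 1) /
      (Real.Gamma ((k : ℝ) + α + 1) * (Nat.factorial (n - k)) * (Nat.factorial k))) * x ^ k

/-- The orthonormal Laguerre functions
`φ_n(x) = √(n!/Γ(n+1+α)) x^{α/2} e^{−x/2} L_n^{(α)}(x)`. -/
noncomputable def laguerreFun (α : ℝ) (n : ℕ) (x : ℝ) : ℝ :=
  Real.sqrt ((Nat.factorial n : ℝ) / Real.Gamma ((n : ℝ) + 1 + α)) *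
    x ^ (α / 2) * Real.exp (-x / 2) * laguerreL α n x

/-- The differentiation matrix `ℰ_{m,n} = ∫_0^∞ φ_m′(x) φ_n(x) dx`. -/
noncomputable def Emat (α : ℝ) (m n : ℕ) : ℝ :=
  ∫ x in Set.Ioi (0 : ℝ), deriv (laguerreFun α m) x * laguerreFun α n x

open Finset Polynomial

lemma fwdDiff_polyEval (p : Polynomial ℝ) :
    fwdDiff (1:ℝ) (fun x => p.eval x) = fun x => (p.comp (X + C 1) - p).eval x := by
  funext x; simp [fwdDiff, eval_comp]

lemma degree_comp_sub_lt (p : Polynomial ℝ) {m : ℕ} (hp : p.degree < ((m:ℕ)+1 : ℕ)) :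
    (p.comp (X + C 1) - p).degree < (m : ℕ) := by
  rcases eq_or_ne (p.comp (X + C 1) - p) 0 with h0 | h0
  · rw [h0, degree_zero]; exact WithBot.bot_lt_coe m
  have hpne : p ≠ 0 := by
    rintro rfl; simp at h0
  have hq : (X + C (1:ℝ)).natDegree = 1 := natDegree_X_add_C 1
  have hlc : (p.comp (X + C 1)).leadingCoeff = p.leadingCoeff := by
    rw [leadingCoeff_comp (by rw [hq]; norm_num)]
    rw [(monic_X_add_C (1:ℝ)).leadingCoeff, one_pow, mul_one]
  have hcompne : p.comp (X + C 1) ≠ 0 := by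
    intro h
    apply hpne
    rw [← leadingCoeff_eq_zero] at h ⊢
    rw [← hlc, h]
  have hdeg : (p.comp (X + C 1)).degree = p.degree := by
    rw [degree_eq_natDegree hcompne, degree_eq_natDegree hpne, natDegree_comp, hq, mul_one]
  have hlt := degree_sub_lt hdeg hcompne hlc
  have hle : p.degree ≤ (m : ℕ) := by
    rw [← Polynomial.natDegree_le_iff_degree_le]
    have h2 := (Polynomial.natDegree_lt_iff_degree_lt hpne).mpr hp
    omega
  calc (p.comp (X + C 1) - p).degree < p.degree := hdeg ▸ hlt
    _ ≤ (m:ℕ) := hle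

lemma iter_fwdDiff_polyEval_eq_zero : ∀ (m : ℕ) (p : Polynomial ℝ), p.degree < (m : ℕ) →
    (fwdDiff (1:ℝ))^[m] (fun x => p.eval x) = 0 := by
  intro m
  induction m with
  | zero =>
    intro p hp
    have : p = 0 := by
      rw [← degree_eq_bot]
      exact Nat.WithBot.lt_zero_iff.mp (by exact_mod_cast hp)
    subst this
    funext x; simp
  | succ m ih =>
    intro p hp
    rw [Function.iterate_succ_apply, fwdDiff_polyEval]
    exact ih _ (degree_comp_sub_lt p hp)

lemma alt_sum_eval_eq_zero {m : ℕ} (p : Polynomial ℝ) (hp : p.degree < (m : ℕ)) :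
    ∑ k ∈ range (m+1), ((-1:ℝ))^k * (m.choose k) * p.eval (k:ℝ) = 0 := by
  have h0 := congrFun (iter_fwdDiff_polyEval_eq_zero m p hp) 0
  rw [fwdDiff_iter_eq_sum_shift] at h0
  simp only [Pi.zero_apply] at h0
  have : ∑ k ∈ range (m+1), ((-1:ℝ))^k * (m.choose k) * p.eval (k:ℝ)
      = (-1:ℝ)^m * ∑ k ∈ range (m + 1),
        ((-1 : ℤ) ^ (m - k) * (m.choose k : ℤ)) • p.eval ((0:ℝ) + k • (1:ℝ)) := by
    rw [Finset.mul_sum]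
    refine Finset.sum_congr rfl fun k hk => ?_
    have hk' : k ≤ m := Nat.lt_succ_iff.mp (mem_range.mp hk)
    have hmk : (-1:ℝ)^(m-k) * (-1:ℝ)^k = (-1:ℝ)^m := by
      rw [← pow_add, Nat.sub_add_cancel hk']
    have hsq : ((-1:ℝ)^(m-k))^2 = 1 := by
      rw [← pow_mul, mul_comm, pow_mul]; norm_num
    have hsgn : ((-1:ℝ))^k = (-1:ℝ)^m * (-1:ℝ)^(m-k) := by
      calc ((-1:ℝ))^k = (-1:ℝ)^k * ((-1:ℝ)^(m-k))^2 := by rw [hsq, mul_one]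
        _ = ((-1:ℝ)^(m-k) * (-1:ℝ)^k) * (-1:ℝ)^(m-k) := by ring
        _ = (-1:ℝ)^m * (-1:ℝ)^(m-k) := by rw [hmk]
    simp only [zsmul_eq_mul, Int.cast_mul, Int.cast_pow, Int.cast_neg, Int.cast_one,
      Int.cast_natCast, nsmul_eq_mul, mul_one, zero_add]
    rw [hsgn]; ring
  rw [this, h0, mul_zero]

lemma Gamma_shift (c : ℝ) (hc : 0 < c) (s : ℕ) :
    Real.Gamma (c + s) = Real.Gamma c * ∏ i ∈ range s, (c + i) := by
  induction s with
  | zero => simp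
  | succ s ih =>
    have hpos : (0:ℝ) < c + s := by positivity
    have h1 : (c + ((s:ℕ)+1:ℕ) : ℝ) = (c + s) + 1 := by push_cast; ring
    rw [h1, Real.Gamma_add_one hpos.ne', ih, prod_range_succ]
    ring

lemma beta_sum : ∀ (m : ℕ) (c : ℝ), 0 < c →
    ∑ k ∈ range (m+1), (-1:ℝ)^k * (m.choose k) / (c + k)
      = (m.factorial) * Real.Gamma c / Real.Gamma (c + m + 1) := by
  intro m
  induction m with
  | zero =>
    intro c hc
    simp only [Nat.cast_zero, add_zero, Nat.factorial_zero, Nat.cast_one, zero_add,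
      range_one, sum_singleton, pow_zero, Nat.choose_self, one_mul]
    rw [Real.Gamma_add_one hc.ne']
    have hΓ := Real.Gamma_pos_of_pos hc
    field_simp
  | succ m ih =>
    intro c hc
    have hc1 : (0:ℝ) < c + 1 := by linarith
    have key : ∑ k ∈ range (m+1+1), (-1:ℝ)^k * ((m+1).choose k) / (c + k)
        = (∑ k ∈ range (m+1), (-1:ℝ)^k * (m.choose k) / (c + k))
          - ∑ k ∈ range (m+1), (-1:ℝ)^k * (m.choose k) / ((c+1) + k) := by
      rw [Finset.sum_range_succ' (fun k => (-1:ℝ)^k * ((m+1).choose k) / (c + k)) (m+1)]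
      have hsplit : ∀ k ∈ range (m+1),
          (-1:ℝ)^(k+1) * ((m+1).choose (k+1)) / (c + (k+1:ℕ))
          = (-1:ℝ)^(k+1) * (m.choose (k+1)) / (c + ((k:ℕ)+1:ℝ))
            - (-1:ℝ)^k * (m.choose k) / ((c+1) + k) := by
        intro k hk
        rw [Nat.choose_succ_succ]
        push_cast
        rw [pow_succ]
        field_simp
        ring
      rw [Finset.sum_congr rfl hsplit, Finset.sum_sub_distrib]
      have hfm : ∑ k ∈ range (m+1), (-1:ℝ)^(k+1) * (m.choose (k+1)) / (c + ((k:ℕ)+1:ℝ))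
          = (∑ k ∈ range (m+1), (-1:ℝ)^k * (m.choose k) / (c + k))
            - (-1:ℝ)^0 * (m.choose 0) / (c + (0:ℕ)) := by
        rw [Finset.sum_range_succ' (fun k => (-1:ℝ)^k * (m.choose k) / (c + k)) m]
        rw [Finset.sum_range_succ]
        simp [Nat.choose_succ_self]
      rw [hfm]
      simp only [Nat.choose_zero_right, Nat.cast_one, Nat.cast_zero, pow_zero]
      push_cast
      ring
    rw [key, ih c hc, ih (c+1) hc1]
    have hΓc := Real.Gamma_pos_of_pos hc
    have h1 : Real.Gamma (c + 1) = c * Real.Gamma c := Real.Gamma_add_one hc.ne'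
    have h2 : Real.Gamma (c + (m+1:ℕ) + 1) = (c + m + 1) * Real.Gamma (c + m + 1) := by
      have hpos : (0:ℝ) < c + m + 1 := by positivity
      have : (c + ((m:ℕ)+1:ℕ) + 1 : ℝ) = (c + m + 1) + 1 := by push_cast; ring
      rw [this, Real.Gamma_add_one hpos.ne']
    have h3 : Real.Gamma (c + 1 + m + 1) = (c + m + 1) * Real.Gamma (c + m + 1) := by
      have : (c + 1 + (m:ℝ) + 1) = (c + ((m:ℕ)+1:ℕ) + 1 : ℝ) := by push_cast; ring
      rw [this, h2]
    rw [h2, h3, h1]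
    have hΓm : (0:ℝ) < Real.Gamma (c + m + 1) := Real.Gamma_pos_of_pos (by positivity)
    have hcm : (0:ℝ) ≠ c + m + 1 := by positivity
    rw [Nat.factorial_succ]
    push_cast
    field_simp
    ring

noncomputable def Lcoef (α : ℝ) (n k : ℕ) : ℝ :=
  (-1 : ℝ) ^ k * (Real.Gamma ((n : ℝ) + α + 1) /
      (Real.Gamma ((k : ℝ) + α + 1) * (Nat.factorial (n - k)) * (Nat.factorial k)))

section core
variable {α : ℝ} (hα : 0 < α)
include hα

lemma Gamma_kα_pos (k : ℕ) : (0:ℝ) < Real.Gamma (α + k + 1) :=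
  Real.Gamma_pos_of_pos (by positivity)

lemma Lcoef_eq (m k : ℕ) (hk : k ≤ m) :
    Lcoef α m k = (Real.Gamma ((m:ℝ) + α + 1) / (m.factorial : ℝ)) *
      ((-1:ℝ)^k * (m.choose k)) * (1 / Real.Gamma (α + k + 1)) := by
  have hΓ : Real.Gamma ((k:ℝ) + α + 1) = Real.Gamma (α + k + 1) := by ring_nf
  have hch : ((m.choose k : ℝ)) = (m.factorial : ℝ) / ((k.factorial : ℝ) * ((m-k).factorial : ℝ)) :=
    Nat.cast_choose ℝ hk
  have hf : (0:ℝ) < (m.factorial : ℝ) := by exact_mod_cast m.factorial_pos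
  have hk' : (0:ℝ) < (k.factorial : ℝ) := by exact_mod_cast k.factorial_pos
  have hmk : (0:ℝ) < ((m-k).factorial : ℝ) := by exact_mod_cast (m-k).factorial_pos
  have hΓp := Gamma_kα_pos hα k
  rw [Lcoef, hΓ, hch]
  field_simp

lemma gamma_poly_eval (k : ℕ) (t : ℕ) (ht : 1 ≤ t) :
    Real.Gamma (α + k + t) = Real.Gamma (α + k + 1) *
      Polynomial.eval (k : ℝ) (∏ i ∈ range (t-1), (X + C (α + 1 + i))) := by
  have hc : (0:ℝ) < α + k + 1 := by positivity
  have h1 : (α + (k:ℝ) + t) = (α + k + 1) + ((t - 1 : ℕ) : ℝ) := by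
    rw [Nat.cast_sub ht]; push_cast; ring
  rw [h1, Gamma_shift _ hc]
  congr 1
  rw [Polynomial.eval_prod]
  refine Finset.prod_congr rfl fun i _ => ?_
  simp only [Polynomial.eval_add, Polynomial.eval_X, Polynomial.eval_C]
  ring

lemma prod_deg (t : ℕ) : (∏ i ∈ range t, (X + C (α + 1 + (i:ℝ)))).degree = (t : WithBot ℕ) := by
  rw [Polynomial.degree_prod]
  have h1 : ∀ i ∈ range t, (X + C (α + 1 + (i:ℝ))).degree = 1 :=
    fun i _ => Polynomial.degree_X_add_C _
  rw [Finset.sum_congr rfl h1, Finset.sum_const, card_range]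
  simp

lemma S_zero (m t : ℕ) (ht1 : 1 ≤ t) (htm : t ≤ m) :
    ∑ k ∈ range (m+1), Lcoef α m k * Real.Gamma (α + k + t) = 0 := by
  set p : Polynomial ℝ := ∏ i ∈ range (t-1), (X + C (α + 1 + (i:ℝ))) with hp
  have hdeg : p.degree < (m : ℕ) := by
    rw [prod_deg hα]
    exact_mod_cast (by omega : t - 1 < m)
  have key := alt_sum_eval_eq_zero p hdeg
  have hterm : ∀ k ∈ range (m+1), Lcoef α m k * Real.Gamma (α + k + t)
      = (Real.Gamma ((m:ℝ) + α + 1) / (m.factorial : ℝ)) *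
        ((-1:ℝ)^k * (m.choose k) * p.eval (k:ℝ)) := by
    intro k hk
    rw [Lcoef_eq hα m k (Nat.lt_succ_iff.mp (mem_range.mp hk)),
      gamma_poly_eval hα k t ht1, ← hp]
    have := (Gamma_kα_pos hα k).ne'
    field_simp
  rw [Finset.sum_congr rfl hterm, ← Finset.mul_sum, key, mul_zero]

lemma P_zero (m l : ℕ) (hl1 : 1 ≤ l) (hlm : l < m) :
    ∑ k ∈ range (m+1), (k:ℝ) * Lcoef α m k * Real.Gamma (α + k + l) = 0 := by
  set q : Polynomial ℝ := X * ∏ i ∈ range (l-1), (X + C (α + 1 + (i:ℝ))) with hq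
  have hq0 : (∏ i ∈ range (l-1), (X + C (α + 1 + (i:ℝ)))) ≠ 0 := by
    intro h
    have := prod_deg hα (l-1)
    rw [h] at this
    simp at this
  have hdeg : q.degree < (m : ℕ) := by
    rw [hq, Polynomial.degree_mul, Polynomial.degree_X, prod_deg hα]
    exact_mod_cast (by omega : 1 + (l - 1) < m)
  have key := alt_sum_eval_eq_zero q hdeg
  have hterm : ∀ k ∈ range (m+1), (k:ℝ) * Lcoef α m k * Real.Gamma (α + k + l)
      = (Real.Gamma ((m:ℝ) + α + 1) / (m.factorial : ℝ)) *
        ((-1:ℝ)^k * (m.choose k) * q.eval (k:ℝ)) := by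
    intro k hk
    rw [Lcoef_eq hα m k (Nat.lt_succ_iff.mp (mem_range.mp hk)),
      gamma_poly_eval hα k l hl1]
    rw [hq]
    simp only [Polynomial.eval_mul, Polynomial.eval_X]
    have := (Gamma_kα_pos hα k).ne'
    field_simp
  rw [Finset.sum_congr rfl hterm, ← Finset.mul_sum, key, mul_zero]

lemma P0_eq (m : ℕ) (hm : 1 ≤ m) :
    ∑ k ∈ range (m+1), (k:ℝ) * Lcoef α m k * Real.Gamma (α + k) = -Real.Gamma (α+1) := by
  have hterm : ∀ k ∈ range (m+1), (k:ℝ) * Lcoef α m k * Real.Gamma (α + k)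
      = (Real.Gamma ((m:ℝ) + α + 1) / (m.factorial : ℝ)) *
        (((-1:ℝ)^k * (m.choose k)) - α * ((-1:ℝ)^k * (m.choose k) / (α + k))) := by
    intro k hk
    rw [Lcoef_eq hα m k (Nat.lt_succ_iff.mp (mem_range.mp hk))]
    have hΓ1 : Real.Gamma (α + k + 1) = (α + k) * Real.Gamma (α + k) := by
      rw [Real.Gamma_add_one (by positivity : α + (k:ℝ) ≠ 0)]
    have hαk : (0:ℝ) < α + k := by positivity
    have hΓpos : (0:ℝ) < Real.Gamma (α + k) := Real.Gamma_pos_of_pos hαk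
    rw [hΓ1]
    field_simp
    ring
  rw [Finset.sum_congr rfl hterm, ← Finset.mul_sum, Finset.sum_sub_distrib]
  have h1 : ∑ k ∈ range (m+1), (-1:ℝ)^k * (m.choose k) = 0 := by
    have := alt_sum_eval_eq_zero (Polynomial.C (1:ℝ))
      (by rw [Polynomial.degree_C one_ne_zero]; exact_mod_cast (by omega : 0 < m)
        : (Polynomial.C (1:ℝ)).degree < (m:ℕ))
    simpa using this
  have h2 : ∑ k ∈ range (m+1), (-1:ℝ)^k * (m.choose k) / (α + k)
      = (m.factorial : ℝ) * Real.Gamma α / Real.Gamma (α + m + 1) := beta_sum m α hα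
  rw [h1]
  have h3 : ∑ k ∈ range (m+1), α * ((-1:ℝ)^k * (m.choose k) / (α + k))
      = α * ((m.factorial:ℝ) * Real.Gamma α / Real.Gamma (α + m + 1)) := by
    rw [← Finset.mul_sum, h2]
  rw [h3]
  have hΓm : (0:ℝ) < Real.Gamma (α + m + 1) := Real.Gamma_pos_of_pos (by positivity)
  have hf : (0:ℝ) < (m.factorial : ℝ) := by exact_mod_cast m.factorial_pos
  have hΓc : Real.Gamma ((m:ℝ) + α + 1) = Real.Gamma (α + m + 1) := by ring_nf
  rw [hΓc, Real.Gamma_add_one hα.ne']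
  field_simp
  ring

end core

section tsum
variable {α : ℝ} (hα : 0 < α)
include hα

lemma Tsum_diag (m : ℕ) :
    ∑ k ∈ range (m+1), ∑ l ∈ range (m+1),
      Lcoef α m k * Lcoef α m l * ((k:ℝ) - l) * Real.Gamma (α + k + l) = 0 := by
  set T := ∑ k ∈ range (m+1), ∑ l ∈ range (m+1),
      Lcoef α m k * Lcoef α m l * ((k:ℝ) - l) * Real.Gamma (α + k + l) with hT
  have hswap : T = ∑ k ∈ range (m+1), ∑ l ∈ range (m+1),
      Lcoef α m l * Lcoef α m k * ((l:ℝ) - k) * Real.Gamma (α + l + k) := by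
    rw [hT, Finset.sum_comm]
  have hneg : T = -T := by
    nth_rewrite 1 [hswap]
    rw [hT, ← Finset.sum_neg_distrib]
    refine Finset.sum_congr rfl fun k _ => ?_
    rw [← Finset.sum_neg_distrib]
    refine Finset.sum_congr rfl fun l _ => ?_
    have hΓ : Real.Gamma (α + (l:ℝ) + k) = Real.Gamma (α + k + l) := by ring_nf
    rw [hΓ]; ring
  linarith

lemma Tsum_off (m n : ℕ) (h : n + 1 ≤ m) :
    ∑ k ∈ range (m+1), ∑ l ∈ range (n+1),
      Lcoef α m k * Lcoef α n l * ((k:ℝ) - l) * Real.Gamma (α + k + l)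
    = -Real.Gamma ((n:ℝ) + α + 1) / (n.factorial : ℝ) := by
  have hsplit : ∀ k ∈ range (m+1), ∀ l ∈ range (n+1),
      Lcoef α m k * Lcoef α n l * ((k:ℝ) - l) * Real.Gamma (α + k + l)
      = Lcoef α n l * ((k:ℝ) * Lcoef α m k * Real.Gamma (α + k + l))
        - (l:ℝ) * Lcoef α n l * (Lcoef α m k * Real.Gamma (α + k + l)) := by
    intro k _ l _; ring
  rw [Finset.sum_congr rfl fun k hk =>
    Finset.sum_congr rfl fun l hl => hsplit k hk l hl]
  rw [Finset.sum_congr rfl fun k _ => Finset.sum_sub_distrib _ _, Finset.sum_sub_distrib]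
  rw [Finset.sum_comm (s := range (m+1)) (t := range (n+1))
    (f := fun k l => Lcoef α n l * ((k:ℝ) * Lcoef α m k * Real.Gamma (α + k + l)))]
  rw [Finset.sum_comm (s := range (m+1)) (t := range (n+1))
    (f := fun k l => (l:ℝ) * Lcoef α n l * (Lcoef α m k * Real.Gamma (α + k + l)))]
  have hfirst : ∑ l ∈ range (n+1), ∑ k ∈ range (m+1),
      Lcoef α n l * ((k:ℝ) * Lcoef α m k * Real.Gamma (α + k + l))
      = -Real.Gamma ((n:ℝ) + α + 1) / (n.factorial : ℝ) := by
    have hin : ∀ l ∈ range (n+1), ∑ k ∈ range (m+1),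
        Lcoef α n l * ((k:ℝ) * Lcoef α m k * Real.Gamma (α + k + l))
        = Lcoef α n l * ∑ k ∈ range (m+1), (k:ℝ) * Lcoef α m k * Real.Gamma (α + k + l) := by
      intro l _; rw [Finset.mul_sum]
    rw [Finset.sum_congr rfl hin]
    rw [Finset.sum_eq_single_of_mem 0 (mem_range.mpr (by omega))]
    · have hz : ∀ k : ℕ, Real.Gamma (α + k + (0:ℕ)) = Real.Gamma (α + k) := by
        intro k; norm_num
      rw [Finset.sum_congr rfl fun k _ => by rw [hz k]]
      rw [P0_eq hα m (by omega)]
      rw [Lcoef]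
      have hΓ0 : Real.Gamma (((0:ℕ):ℝ) + α + 1) = Real.Gamma (α + 1) := by norm_num
      rw [hΓ0]
      have hΓp : (0:ℝ) < Real.Gamma (α + 1) := Real.Gamma_pos_of_pos (by positivity)
      have hf : (0:ℝ) < (n.factorial : ℝ) := by exact_mod_cast n.factorial_pos
      simp only [pow_zero, Nat.sub_zero, Nat.factorial_zero, Nat.cast_one, one_mul, mul_one]
      field_simp
    · intro l hl hl0
      rw [P_zero hα m l (by omega) (by
        have := mem_range.mp hl; omega), mul_zero]
  have hsecond : ∑ l ∈ range (n+1), ∑ k ∈ range (m+1),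
      (l:ℝ) * Lcoef α n l * (Lcoef α m k * Real.Gamma (α + k + l)) = 0 := by
    refine Finset.sum_eq_zero fun l hl => ?_
    rcases Nat.eq_zero_or_pos l with rfl | hl0
    · simp
    · have hin : ∑ k ∈ range (m+1), (l:ℝ) * Lcoef α n l * (Lcoef α m k * Real.Gamma (α + k + l))
          = (l:ℝ) * Lcoef α n l * ∑ k ∈ range (m+1), Lcoef α m k * Real.Gamma (α + k + l) := by
        rw [Finset.mul_sum]
      rw [hin, S_zero hα m l hl0 (by have := mem_range.mp hl; omega), mul_zero]
  rw [hfirst, hsecond, sub_zero]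

end tsum

section analysis
variable {α : ℝ}

lemma laguerreL_eq_sum (n : ℕ) (x : ℝ) :
    laguerreL α n x = ∑ k ∈ range (n+1), Lcoef α n k * x ^ k := rfl

lemma hasDerivAt_laguerreL (n : ℕ) (x : ℝ) :
    HasDerivAt (laguerreL α n)
      (∑ k ∈ range (n+1), Lcoef α n k * ((k:ℝ) * x ^ (k-1))) x := by
  have h : ∀ k ∈ range (n+1), HasDerivAt (fun x : ℝ => Lcoef α n k * x ^ k)
      (Lcoef α n k * ((k:ℝ) * x ^ (k-1))) x := fun k _ => (hasDerivAt_pow k x).const_mul _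
  have := HasDerivAt.fun_sum h
  exact this

lemma hasDerivAt_laguerreFun (m : ℕ) {x : ℝ} (hx : 0 < x) :
    HasDerivAt (laguerreFun α m)
      (Real.sqrt ((Nat.factorial m : ℝ) / Real.Gamma ((m : ℝ) + 1 + α)) *
        ((α/2) * x ^ (α/2 - 1) * Real.exp (-x/2) * laguerreL α m x
          - (1/2) * (x ^ (α/2) * Real.exp (-x/2) * laguerreL α m x)
          + x ^ (α/2) * Real.exp (-x/2) *
              ∑ k ∈ range (m+1), Lcoef α m k * ((k:ℝ) * x ^ (k-1)))) x := by
  have h1 : HasDerivAt (fun x : ℝ => x ^ (α/2)) ((α/2) * x ^ (α/2 - 1)) x :=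
    Real.hasDerivAt_rpow_const (Or.inl hx.ne')
  have hi : HasDerivAt (fun x : ℝ => -x/2) (-(1/2)) x := by
    have h0 := (hasDerivAt_id x).neg.div_const 2
    norm_num at h0 ⊢
    exact h0
  have h2 : HasDerivAt (fun x : ℝ => Real.exp (-x/2)) (Real.exp (-x/2) * (-(1/2))) x := by
    exact (Real.hasDerivAt_exp (-x/2)).comp x hi
  have h3 := hasDerivAt_laguerreL (α := α) m x
  have h := ((h1.mul h2).mul h3).const_mul
    (Real.sqrt ((Nat.factorial m : ℝ) / Real.Gamma ((m : ℝ) + 1 + α)))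
  have heq : laguerreFun α m = fun y : ℝ =>
      Real.sqrt ((Nat.factorial m : ℝ) / Real.Gamma ((m : ℝ) + 1 + α)) *
        ((fun y : ℝ => y ^ (α/2)) y * (fun y : ℝ => Real.exp (-y/2)) y * laguerreL α m y) := by
    funext y; rw [laguerreFun]; ring
  rw [heq]
  refine h.congr_deriv ?_
  simp only [Pi.mul_apply]
  ring

lemma term_eq (hα : 0 < α) {x : ℝ} (hx : 0 < x) (k l : ℕ) :
    (α/2 + k) * (Real.exp (-x) * x ^ (α + k + l - 1))
      - (1/2) * (Real.exp (-x) * x ^ (α + k + l + 1 - 1))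
    = ((α/2) * x ^ (α/2 - 1) * Real.exp (-x/2) * x ^ k
        - (1/2) * (x ^ (α/2) * Real.exp (-x/2) * x ^ k)
        + x ^ (α/2) * Real.exp (-x/2) * ((k:ℝ) * x ^ (k-1)))
      * (x ^ (α/2) * Real.exp (-x/2) * x ^ l) := by
  have hE : Real.exp (-x/2) * Real.exp (-x/2) = Real.exp (-x) := by
    rw [← Real.exp_add]; ring_nf
  have hA : x ^ (α + k + l - 1) = x ^ (α/2 - 1) * x ^ (α/2) * ((x:ℝ) ^ (k:ℕ) * x ^ (l:ℕ)) := by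
    rw [← Real.rpow_natCast x k, ← Real.rpow_natCast x l, ← Real.rpow_add hx,
      ← Real.rpow_add hx, ← Real.rpow_add hx]
    congr 1; ring
  have hB : x ^ (α + k + l + 1 - 1) = x ^ (α/2) * x ^ (α/2) * ((x:ℝ) ^ (k:ℕ) * x ^ (l:ℕ)) := by
    rw [← Real.rpow_natCast x k, ← Real.rpow_natCast x l, ← Real.rpow_add hx,
      ← Real.rpow_add hx, ← Real.rpow_add hx]
    congr 1; ring
  have hC : (k:ℝ) * x ^ (α + k + l - 1)
      = (k:ℝ) * (x ^ (α/2) * x ^ (α/2) * ((x:ℝ) ^ (k-1:ℕ) * x ^ (l:ℕ))) := by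
    rcases Nat.eq_zero_or_pos k with rfl | hk
    · simp
    · have hk1 : ((k-1:ℕ):ℝ) = (k:ℝ) - 1 := by
        rw [Nat.cast_sub hk]; norm_num
      rw [← Real.rpow_natCast x (k-1), ← Real.rpow_natCast x l, hk1, ← Real.rpow_add hx,
        ← Real.rpow_add hx, ← Real.rpow_add hx]
      congr 2; ring
  calc (α/2 + k) * (Real.exp (-x) * x ^ (α + k + l - 1))
        - (1/2) * (Real.exp (-x) * x ^ (α + k + l + 1 - 1))
      = (α/2) * (Real.exp (-x) * x ^ (α + k + l - 1))
          + (Real.exp (-x) * ((k:ℝ) * x ^ (α + k + l - 1)))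
          - (1/2) * (Real.exp (-x) * x ^ (α + k + l + 1 - 1)) := by ring
    _ = _ := by rw [hC, hA, hB, ← hE]; ring

lemma integrand_eq (hα : 0 < α) (m n : ℕ) {x : ℝ} (hx : 0 < x) :
    deriv (laguerreFun α m) x * laguerreFun α n x
    = ∑ k ∈ range (m+1), ∑ l ∈ range (n+1),
        (Real.sqrt ((Nat.factorial m : ℝ) / Real.Gamma ((m : ℝ) + 1 + α)) *
          Real.sqrt ((Nat.factorial n : ℝ) / Real.Gamma ((n : ℝ) + 1 + α)) *
          Lcoef α m k * Lcoef α n l) *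
          ((α/2 + k) * (Real.exp (-x) * x ^ (α + k + l - 1))
            - (1/2) * (Real.exp (-x) * x ^ (α + k + l + 1 - 1))) := by
  have hterm : ∀ k ∈ range (m+1), ∀ l ∈ range (n+1),
      (Real.sqrt ((Nat.factorial m : ℝ) / Real.Gamma ((m : ℝ) + 1 + α)) *
          Real.sqrt ((Nat.factorial n : ℝ) / Real.Gamma ((n : ℝ) + 1 + α)) *
          Lcoef α m k * Lcoef α n l) *
          ((α/2 + k) * (Real.exp (-x) * x ^ (α + k + l - 1))
            - (1/2) * (Real.exp (-x) * x ^ (α + k + l + 1 - 1)))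
      = (Lcoef α m k * ((α/2) * x ^ (α/2 - 1) * Real.exp (-x/2) * x ^ k
            - (1/2) * (x ^ (α/2) * Real.exp (-x/2) * x ^ k)
            + x ^ (α/2) * Real.exp (-x/2) * ((k:ℝ) * x ^ (k-1))))
        * (Real.sqrt ((Nat.factorial m : ℝ) / Real.Gamma ((m : ℝ) + 1 + α)) *
            Real.sqrt ((Nat.factorial n : ℝ) / Real.Gamma ((n : ℝ) + 1 + α)) *
            (Lcoef α n l * (x ^ (α/2) * Real.exp (-x/2) * x ^ l))) := by
    intro k _ l _
    rw [term_eq hα hx k l]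
    ring
  rw [Finset.sum_congr rfl fun k hk => Finset.sum_congr rfl fun l hl => hterm k hk l hl]
  rw [← Finset.sum_mul_sum]
  rw [(hasDerivAt_laguerreFun m hx).deriv, laguerreFun, laguerreL_eq_sum, laguerreL_eq_sum]
  have hA : ∑ k ∈ range (m+1), (Lcoef α m k * ((α/2) * x ^ (α/2 - 1) * Real.exp (-x/2) * x ^ k
            - (1/2) * (x ^ (α/2) * Real.exp (-x/2) * x ^ k)
            + x ^ (α/2) * Real.exp (-x/2) * ((k:ℝ) * x ^ (k-1))))
      = (α/2) * x ^ (α/2 - 1) * Real.exp (-x/2) * (∑ k ∈ range (m+1), Lcoef α m k * x ^ k)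
          - (1/2) * (x ^ (α/2) * Real.exp (-x/2) * (∑ k ∈ range (m+1), Lcoef α m k * x ^ k))
          + x ^ (α/2) * Real.exp (-x/2) *
              ∑ k ∈ range (m+1), Lcoef α m k * ((k:ℝ) * x ^ (k-1)) := by
    simp only [Finset.mul_sum]
    rw [← Finset.sum_sub_distrib, ← Finset.sum_add_distrib]
    exact Finset.sum_congr rfl fun k _ => by ring
  have hB : ∑ l ∈ range (n+1),
        (Real.sqrt ((Nat.factorial m : ℝ) / Real.Gamma ((m : ℝ) + 1 + α)) *
            Real.sqrt ((Nat.factorial n : ℝ) / Real.Gamma ((n : ℝ) + 1 + α)) *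
            (Lcoef α n l * (x ^ (α/2) * Real.exp (-x/2) * x ^ l)))
      = Real.sqrt ((Nat.factorial m : ℝ) / Real.Gamma ((m : ℝ) + 1 + α)) *
          Real.sqrt ((Nat.factorial n : ℝ) / Real.Gamma ((n : ℝ) + 1 + α)) *
          (x ^ (α/2) * Real.exp (-x/2) * (∑ l ∈ range (n+1), Lcoef α n l * x ^ l)) := by
    simp only [Finset.mul_sum]
    exact Finset.sum_congr rfl fun l _ => by ring
  rw [hA, hB]
  ring

end analysis

section integral
variable {α : ℝ}

lemma pair_integrable (hα : 0 < α) (C : ℝ) (k l : ℕ) :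
    Integrable (fun x : ℝ =>
      C * ((α/2 + k) * (Real.exp (-x) * x ^ (α + k + l - 1))
        - (1/2) * (Real.exp (-x) * x ^ (α + k + l + 1 - 1))))
      (volume.restrict (Set.Ioi 0)) := by
  have h1 : (0:ℝ) < α + k + l := by positivity
  have h2 : (0:ℝ) < α + k + l + 1 := by positivity
  have g1 := Real.GammaIntegral_convergent h1
  have g2 := Real.GammaIntegral_convergent h2
  exact (((g1.const_mul (α/2 + k)).sub (g2.const_mul (1/2))).const_mul C)

lemma pair_integral (hα : 0 < α) (C : ℝ) (k l : ℕ) :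
    ∫ x in Set.Ioi (0:ℝ),
      C * ((α/2 + k) * (Real.exp (-x) * x ^ (α + k + l - 1))
        - (1/2) * (Real.exp (-x) * x ^ (α + k + l + 1 - 1)))
    = C * ((α/2 + k) * Real.Gamma (α + k + l) - (1/2) * Real.Gamma (α + k + l + 1)) := by
  have h1 : (0:ℝ) < α + k + l := by positivity
  have h2 : (0:ℝ) < α + k + l + 1 := by positivity
  have g1 := Real.GammaIntegral_convergent h1
  have g2 := Real.GammaIntegral_convergent h2
  rw [MeasureTheory.integral_const_mul]
  congr 1
  rw [integral_sub (g1.const_mul (α/2 + k)) (g2.const_mul (1/2))]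
  rw [MeasureTheory.integral_const_mul, MeasureTheory.integral_const_mul]
  rw [← Real.Gamma_eq_integral h1, ← Real.Gamma_eq_integral h2]

lemma Emat_eq_sum (hα : 0 < α) (m n : ℕ) :
    Emat α m n = ∑ k ∈ range (m+1), ∑ l ∈ range (n+1),
      (Real.sqrt ((Nat.factorial m : ℝ) / Real.Gamma ((m : ℝ) + 1 + α)) *
        Real.sqrt ((Nat.factorial n : ℝ) / Real.Gamma ((n : ℝ) + 1 + α)) *
        Lcoef α m k * Lcoef α n l) *
        ((α/2 + k) * Real.Gamma (α + k + l) - (1/2) * Real.Gamma (α + k + l + 1)) := by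
  rw [Emat]
  rw [setIntegral_congr_fun measurableSet_Ioi (fun x hx => integrand_eq hα m n hx)]
  rw [integral_finset_sum _ (fun k _ => integrable_finset_sum _
    (fun l _ => pair_integrable hα _ k l))]
  refine Finset.sum_congr rfl fun k _ => ?_
  rw [integral_finset_sum _ (fun l _ => pair_integrable hα _ k l)]
  exact Finset.sum_congr rfl fun l _ => pair_integral hα _ k l

lemma Emat_eq_T (hα : 0 < α) (m n : ℕ) :
    Emat α m n = (1/2) *
      (Real.sqrt ((Nat.factorial m : ℝ) / Real.Gamma ((m : ℝ) + 1 + α)) *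
        Real.sqrt ((Nat.factorial n : ℝ) / Real.Gamma ((n : ℝ) + 1 + α))) *
      ∑ k ∈ range (m+1), ∑ l ∈ range (n+1),
        Lcoef α m k * Lcoef α n l * ((k:ℝ) - l) * Real.Gamma (α + k + l) := by
  rw [Emat_eq_sum hα m n]
  simp only [Finset.mul_sum]
  refine Finset.sum_congr rfl fun k _ => Finset.sum_congr rfl fun l _ => ?_
  have hpos : (0:ℝ) < α + k + l := by positivity
  rw [Real.Gamma_add_one hpos.ne']
  ring

end integral


/-- For `α > 0`: `ℰ_{m,m} = 0` for all `m`, and for `m ≥ n + 1`: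
`ℰ_{m,n} = −(1/2)√(m! Γ(n+1+α)/(Γ(m+1+α) n!))`. -/
theorem Emat_entries (α : ℝ) (hα : 0 < α) :
    (∀ m : ℕ, Emat α m m = 0) ∧
    (∀ m n : ℕ, n + 1 ≤ m →
      Emat α m n = -(1 / 2) * Real.sqrt ((Nat.factorial m : ℝ) *
        Real.Gamma ((n : ℝ) + 1 + α) /
          (Real.Gamma ((m : ℝ) + 1 + α) * (Nat.factorial n : ℝ)))) := by
  constructor
  · intro m
    rw [Emat_eq_T hα m m, Tsum_diag hα m, mul_zero]
  · intro m n hmn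
    rw [Emat_eq_T hα m n, Tsum_off hα m n hmn]
    have ha : (0:ℝ) < (m.factorial : ℝ) := by exact_mod_cast m.factorial_pos
    have hc : (0:ℝ) < (n.factorial : ℝ) := by exact_mod_cast n.factorial_pos
    have hb : (0:ℝ) < Real.Gamma ((m:ℝ) + 1 + α) := Real.Gamma_pos_of_pos (by positivity)
    have hd : (0:ℝ) < Real.Gamma ((n:ℝ) + 1 + α) := Real.Gamma_pos_of_pos (by positivity)
    have hcomm : Real.Gamma ((n:ℝ) + α + 1) = Real.Gamma ((n:ℝ) + 1 + α) := by ring_nf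
    rw [hcomm]
    set a := (m.factorial : ℝ) with hA'
    set b := Real.Gamma ((m:ℝ)+1+α) with hB'
    set c := (n.factorial : ℝ) with hC'
    set d := Real.Gamma ((n:ℝ)+1+α) with hD'
    have key : Real.sqrt (a/b) * Real.sqrt (c/d) * (d/c) = Real.sqrt (a*d/(b*c)) := by
      rw [← Real.sqrt_sq (le_of_lt (div_pos hd hc)), mul_assoc,
        ← Real.sqrt_mul (div_nonneg hc.le hd.le), ← Real.sqrt_mul (div_nonneg ha.le hb.le)]
      congr 1
      field_simp
    rw [← key]
    ring
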